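/- Let n = 2, α₁ = α₂ = 1/2, h₁ = h₂ = 0, J₁₁ = J₂₂, and G as in the two-population model. Then (0,0) is a critical point of G, and the Hessian of G at (0,0) is positive definite if and only if either (0 < J₁₁ ≤ 1 and −J₁₁ < J₁₂ < J₁₁) or (1 < J₁₁ < 2 and J₁₁ − 2 < J₁₂ < 2 − J₁₁). -/

import Mathlib

open Real

private lemma aux_logcosh (q b x : ℝ) :
    HasDerivAt (fun t => Real.log (Real.cosh (q * t + b)))
      (q * Real.tanh (q * x + b)) x := by
  have h1 : HasDerivAt (fun t : ℝ => q * t + b) q x := by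
    simpa using ((hasDerivAt_id x).const_mul q).add_const b
  have h2 := h1.cosh
  have h3 := h2.log (Real.cosh_pos _).ne'
  convert h3 using 1
  rw [Real.tanh_eq_sinh_div_cosh]
  ring

private lemma aux_tanh (q : ℝ) : HasDerivAt (fun t => Real.tanh (q * t)) q 0 := by
  have h1 : HasDerivAt (fun t : ℝ => q * t) q 0 := by
    simpa using (hasDerivAt_id (0:ℝ)).const_mul q
  have hs := h1.sinh
  have hc := h1.cosh
  have h := hs.div hc (Real.cosh_pos _).ne'
  have hfe : (fun t : ℝ => Real.sinh (q * t) / Real.cosh (q * t))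
      = fun t => Real.tanh (q * t) := by
    funext t; rw [Real.tanh_eq_sinh_div_cosh]
  have h : HasDerivAt (fun t : ℝ => Real.sinh (q * t) / Real.cosh (q * t)) _ 0 := h
  rw [hfe] at h
  convert h using 1
  simp

private lemma oneVar (c q r x : ℝ) :
    HasDerivAt (fun t => c * t^2 - (1/2) * Real.log (Real.cosh (q * t))
        - (1/2) * Real.log (Real.cosh (r * t)))
      (2 * c * x - (q/2) * Real.tanh (q * x) - (r/2) * Real.tanh (r * x)) x := by
  have hp : HasDerivAt (fun t : ℝ => c * t^2) (2 * c * x) x := by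
    have := (hasDerivAt_pow 2 x).const_mul c
    exact this.congr_deriv (by push_cast; ring)
  have h1 := (aux_logcosh q 0 x).const_mul (1/2 : ℝ)
  have h2 := (aux_logcosh r 0 x).const_mul (1/2 : ℝ)
  simp only [add_zero] at h1 h2
  have := (hp.sub h1).sub h2
  exact this.congr_deriv (by ring)

private lemma posdef2 (A B : ℝ) :
    (Matrix.of !![A, B; B, A]).PosDef ↔ 0 < A + B ∧ 0 < A - B := by
  rw [Matrix.posDef_iff_dotProduct_mulVec]
  have hM : ∀ i j, Matrix.of !![A, B; B, A] i j = !![A, B; B, A] i j := fun _ _ => rfl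
  constructor
  · intro h
    have h1 := h.2 (x := ![1, 1]) (by intro hc; simpa using congrFun hc 0)
    have h2 := h.2 (x := ![1, -1]) (by intro hc; simpa using congrFun hc 0)
    simp [Matrix.mulVec, dotProduct, Fin.sum_univ_two, hM] at h1 h2
    constructor <;> linarith
  · rintro ⟨h1, h2⟩
    constructor
    · ext i j
      fin_cases i <;> fin_cases j <;> simp [hM]
    · intro x hx
      have hne : x 0 + x 1 ≠ 0 ∨ x 0 - x 1 ≠ 0 := by
        by_contra hc
        push_neg at hc
        apply hx
        funext i
        fin_cases i <;> simp <;> linarith [hc.1, hc.2]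
      have key : dotProduct (star x) (Matrix.mulVec (Matrix.of !![A, B; B, A]) x)
          = ((A + B) * (x 0 + x 1)^2 + (A - B) * (x 0 - x 1)^2) / 2 := by
        simp [Matrix.mulVec, dotProduct, Fin.sum_univ_two, hM]
        ring
      rw [key]
      rcases hne with hne | hne
      · nlinarith [mul_nonneg h2.le (sq_nonneg (x 0 - x 1)),
          mul_pos h1 (pow_pos (abs_pos.mpr hne) 2), sq_abs (x 0 + x 1)]
      · nlinarith [mul_nonneg h1.le (sq_nonneg (x 0 + x 1)),
          mul_pos h2 (pow_pos (abs_pos.mpr hne) 2), sq_abs (x 0 - x 1)]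

private lemma fact_pos (t : ℝ) (h : 0 < t * (2 - t)) : 0 < t ∧ t < 2 := by
  constructor <;> nlinarith [sq_nonneg t, sq_nonneg (2 - t)]

theorem stmt11 (J11 J12 : ℝ)
    (G : ℝ → ℝ → ℝ)
    (hG : ∀ x1 x2, G x1 x2 = (1/8) * (J11 * x1^2 + 2 * J12 * x1 * x2 + J11 * x2^2)
      - (1/2) * Real.log (Real.cosh (J11/2 * x1 + J12/2 * x2))
      - (1/2) * Real.log (Real.cosh (J12/2 * x1 + J11/2 * x2))) :
    (deriv (fun x => G x 0) 0 = 0 ∧ deriv (fun y => G 0 y) 0 = 0) ∧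
    ((Matrix.of
        !![iteratedDeriv 2 (fun x => G x 0) 0, deriv (fun y => deriv (fun x => G x y) 0) 0;
           deriv (fun y => deriv (fun x => G x y) 0) 0, iteratedDeriv 2 (fun y => G 0 y) 0]).PosDef
      ↔ ((0 < J11 ∧ J11 ≤ 1 ∧ -J11 < J12 ∧ J12 < J11) ∨
         (1 < J11 ∧ J11 < 2 ∧ J11 - 2 < J12 ∧ J12 < 2 - J11))) := by
  have hGx0 : (fun x => G x 0) = fun t => (J11/8) * t^2
      - (1/2) * Real.log (Real.cosh ((J11/2) * t))
      - (1/2) * Real.log (Real.cosh ((J12/2) * t)) := by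
    funext t; rw [hG]; norm_num; ring_nf
  have hG0y : (fun y => G 0 y) = fun t => (J11/8) * t^2
      - (1/2) * Real.log (Real.cosh ((J12/2) * t))
      - (1/2) * Real.log (Real.cosh ((J11/2) * t)) := by
    funext t; rw [hG]; norm_num; ring_nf
  have dGx0 : ∀ x, deriv (fun x => G x 0) x
      = 2 * (J11/8) * x - (J11/2/2) * Real.tanh ((J11/2) * x)
        - (J12/2/2) * Real.tanh ((J12/2) * x) := by
    intro x; rw [hGx0]; exact (oneVar (J11/8) (J11/2) (J12/2) x).deriv
  have dG0y : ∀ x, deriv (fun y => G 0 y) x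
      = 2 * (J11/8) * x - (J12/2/2) * Real.tanh ((J12/2) * x)
        - (J11/2/2) * Real.tanh ((J11/2) * x) := by
    intro x; rw [hG0y]; exact (oneVar (J11/8) (J12/2) (J11/2) x).deriv
  have d1x : deriv (fun x => G x 0) 0 = 0 := by
    rw [dGx0]; simp [Real.tanh_zero]
  have d1y : deriv (fun y => G 0 y) 0 = 0 := by
    rw [dG0y]; simp [Real.tanh_zero]
  have A2 : iteratedDeriv 2 (fun x => G x 0) 0
      = J11/4 - J11^2/8 - J12^2/8 := by
    rw [iteratedDeriv_succ, iteratedDeriv_one]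
    have hfe : deriv (fun x => G x 0) = fun x => 2 * (J11/8) * x
        - (J11/2/2) * Real.tanh ((J11/2) * x) - (J12/2/2) * Real.tanh ((J12/2) * x) := by
      funext x; exact dGx0 x
    rw [hfe]
    have hl : HasDerivAt (fun x : ℝ => 2 * (J11/8) * x) (2 * (J11/8)) 0 := by
      simpa using (hasDerivAt_id (0:ℝ)).const_mul (2 * (J11/8))
    have h := (hl.sub ((aux_tanh (J11/2)).const_mul (J11/2/2))).sub
      ((aux_tanh (J12/2)).const_mul (J12/2/2))
    refine h.deriv.trans ?_; ring
  have B2 : iteratedDeriv 2 (fun y => G 0 y) 0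
      = J11/4 - J11^2/8 - J12^2/8 := by
    rw [iteratedDeriv_succ, iteratedDeriv_one]
    have hfe : deriv (fun y => G 0 y) = fun x => 2 * (J11/8) * x
        - (J12/2/2) * Real.tanh ((J12/2) * x) - (J11/2/2) * Real.tanh ((J11/2) * x) := by
      funext x; exact dG0y x
    rw [hfe]
    have hl : HasDerivAt (fun x : ℝ => 2 * (J11/8) * x) (2 * (J11/8)) 0 := by
      simpa using (hasDerivAt_id (0:ℝ)).const_mul (2 * (J11/8))
    have h := (hl.sub ((aux_tanh (J12/2)).const_mul (J12/2/2))).sub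
      ((aux_tanh (J11/2)).const_mul (J11/2/2))
    refine h.deriv.trans ?_; ring
  have dmix : ∀ y, deriv (fun x => G x y) 0
      = (J12/4) * y - (J11/4) * Real.tanh ((J12/2) * y)
        - (J12/4) * Real.tanh ((J11/2) * y) := by
    intro y
    have hfe : (fun x => G x y) = fun t =>
        (1/8) * (J11 * t^2 + 2 * J12 * t * y + J11 * y^2)
        - (1/2) * Real.log (Real.cosh (J11/2 * t + J12/2 * y))
        - (1/2) * Real.log (Real.cosh (J12/2 * t + J11/2 * y)) := by
      funext t; exact hG t y
    rw [hfe]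
    have a1 : HasDerivAt (fun t : ℝ => J11 * t^2) (J11 * (2 * 0)) 0 := by
      simpa using (hasDerivAt_pow 2 (0:ℝ)).const_mul J11
    have a2 : HasDerivAt (fun t : ℝ => 2 * J12 * t * y) (2 * J12 * y) 0 := by
      simpa using ((hasDerivAt_id (0:ℝ)).const_mul (2 * J12)).mul_const y
    have hp := ((a1.add a2).add_const (J11 * y^2)).const_mul (1/8 : ℝ)
    have l1 := (aux_logcosh (J11/2) (J12/2 * y) 0).const_mul (1/2 : ℝ)
    have l2 := (aux_logcosh (J12/2) (J11/2 * y) 0).const_mul (1/2 : ℝ)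
    have h := (hp.sub l1).sub l2
    refine h.deriv.trans ?_
    simp only [mul_zero, zero_add]
    ring
  have Cmix : deriv (fun y => deriv (fun x => G x y) 0) 0
      = J12/4 - J11 * J12/4 := by
    have hfe : (fun y => deriv (fun x => G x y) 0) = fun y =>
        (J12/4) * y - (J11/4) * Real.tanh ((J12/2) * y)
        - (J12/4) * Real.tanh ((J11/2) * y) := by
      funext y; exact dmix y
    rw [hfe]
    have hl : HasDerivAt (fun y : ℝ => (J12/4) * y) (J12/4) 0 := by
      simpa using (hasDerivAt_id (0:ℝ)).const_mul (J12/4)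
    have h := (hl.sub ((aux_tanh (J12/2)).const_mul (J11/4))).sub
      ((aux_tanh (J11/2)).const_mul (J12/4))
    refine h.deriv.trans ?_; ring
  refine ⟨⟨d1x, d1y⟩, ?_⟩
  rw [A2, B2, Cmix, posdef2]
  constructor
  · rintro ⟨h1, h2⟩
    obtain ⟨hs1, hs2⟩ := fact_pos (J11 + J12) (by nlinarith)
    obtain ⟨hd1, hd2⟩ := fact_pos (J11 - J12) (by nlinarith)
    rcases le_or_gt J11 1 with h | h
    · exact Or.inl ⟨by linarith, h, by linarith, by linarith⟩
    · exact Or.inr ⟨h, by linarith, by linarith, by linarith⟩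
  · rintro (⟨h1, h2, h3, h4⟩ | ⟨h1, h2, h3, h4⟩) <;>
      refine ⟨?_, ?_⟩ <;>
      nlinarith [mul_pos (show (0:ℝ) < J11 + J12 by linarith)
          (show (0:ℝ) < 2 - (J11 + J12) by linarith),
        mul_pos (show (0:ℝ) < J11 - J12 by linarith)
          (show (0:ℝ) < 2 - (J11 - J12) by linarith)]
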